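/- For every ε > 0 there is δ > 0 such that whenever x, y ∈ X satisfy Ē(x,y) < δ, there exists N ∈ ℕ (depending on x and y) so that ρ(m_T(x,n), m_T(y,n)) < ε for all n ≥ N. -/

import Mathlib

open Filter MeasureTheory Topology
open scoped ENNReal NNReal

noncomputable def EnDist {X : Type*} [MetricSpace X] (T : X → X) (n : ℕ) (x y : X) : ℝ :=
  ⨅ σ : Equiv.Perm (Fin n), (1 / (n : ℝ)) * ∑ k : Fin n, dist (T^[(k : ℕ)] x) (T^[((σ k) : ℕ)] y)

noncomputable def Ebar {X : Type*} [MetricSpace X] (T : X → X) (x y : X) : ℝ :=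
  Filter.limsup (fun n => EnDist T n x y) Filter.atTop

/-- The empirical measure `m_T(x,n) = (1/n) Σ_{j<n} δ_{T^j x}`. -/
noncomputable def empMeas {X : Type*} [MeasurableSpace X] (T : X → X) (x : X) (n : ℕ) :
    Measure X :=
  ((n : ℝ≥0∞))⁻¹ • ∑ j ∈ Finset.range n, MeasureTheory.Measure.dirac (T^[j] x)

open scoped Classical in
lemma empMeas_apply {X : Type*} [MeasurableSpace X] (T : X → X) (x : X) (n : ℕ)
    {B : Set X} (hB : MeasurableSet B) :
    empMeas T x n B
      = ((n : ℝ≥0∞))⁻¹ *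
        ((Finset.univ.filter (fun j : Fin n => T^[(j : ℕ)] x ∈ B)).card : ℝ≥0∞) := by
  rw [empMeas, Measure.smul_apply, Measure.finset_sum_apply, smul_eq_mul]
  congr 1
  rw [← Fin.sum_univ_eq_sum_range (fun j => (Measure.dirac (T^[j] x)) B)]
  rw [← Finset.sum_boole]
  refine Finset.sum_congr rfl fun j _ => ?_
  rw [Measure.dirac_apply' _ hB]
  by_cases h : T^[(j : ℕ)] x ∈ B <;> simp [h]

open scoped Classical in
/-- Core counting lemma: a matching with small average distance gives a
Prokhorov-type one-sided bound on empirical measures. -/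
lemma emp_bound {X : Type*} [MetricSpace X] [MeasurableSpace X] [BorelSpace X]
    (T : X → X) (x y : X) {n : ℕ} (hn : 0 < n) (σ : Equiv.Perm (Fin n)) {ε : ℝ}
    (hε : 0 < ε)
    (hsum : ∑ k : Fin n, dist (T^[(k : ℕ)] x) (T^[((σ k) : ℕ)] y) < n * ε ^ 2)
    {B : Set X} (hB : MeasurableSet B) :
    empMeas T x n B ≤ empMeas T y n (Metric.thickening ε B) + ENNReal.ofReal ε := by
  classical
  set A : Finset (Fin n) := Finset.univ.filter (fun j : Fin n => T^[(j : ℕ)] x ∈ B) with hA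
  set A₁ : Finset (Fin n) := Finset.univ.filter
    (fun j : Fin n => T^[(j : ℕ)] x ∈ B ∧ dist (T^[(j : ℕ)] x) (T^[((σ j) : ℕ)] y) < ε) with hA₁
  set A₂ : Finset (Fin n) := Finset.univ.filter
    (fun j : Fin n => ε ≤ dist (T^[(j : ℕ)] x) (T^[((σ j) : ℕ)] y)) with hA₂
  set C : Finset (Fin n) := Finset.univ.filter
    (fun j : Fin n => T^[(j : ℕ)] y ∈ Metric.thickening ε B) with hC
  have hsub : A ⊆ A₁ ∪ A₂ := by
    intro j hj
    rw [hA, Finset.mem_filter] at hj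
    rcases lt_or_ge (dist (T^[(j : ℕ)] x) (T^[((σ j) : ℕ)] y)) ε with h | h
    · exact Finset.mem_union_left _ (by rw [hA₁, Finset.mem_filter]; exact ⟨Finset.mem_univ _, hj.2, h⟩)
    · exact Finset.mem_union_right _ (by rw [hA₂, Finset.mem_filter]; exact ⟨Finset.mem_univ _, h⟩)
  have hcard : A.card ≤ A₁.card + A₂.card :=
    (Finset.card_le_card hsub).trans (Finset.card_union_le _ _)
  have h12 : A₁.card ≤ C.card := by
    apply Finset.card_le_card_of_injOn (fun j => σ j)
    · intro j hj
      rw [Finset.mem_coe, Finset.mem_filter] at hj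
      rw [Finset.mem_coe, hC, Finset.mem_filter]
      refine ⟨Finset.mem_univ _, ?_⟩
      rw [Metric.mem_thickening_iff]
      exact ⟨T^[(j : ℕ)] x, hj.2.1, by rw [dist_comm]; exact hj.2.2⟩
    · exact fun a _ b _ h => σ.injective h
  have h2 : (A₂.card : ℝ) ≤ n * ε := by
    have hle : (A₂.card : ℝ) * ε
        ≤ ∑ k ∈ A₂, dist (T^[(k : ℕ)] x) (T^[((σ k) : ℕ)] y) := by
      have := Finset.card_nsmul_le_sum A₂
        (fun k => dist (T^[(k : ℕ)] x) (T^[((σ k) : ℕ)] y)) ε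
        (fun k hk => by rw [hA₂, Finset.mem_filter] at hk; exact hk.2)
      simpa [nsmul_eq_mul] using this
    have hle2 : ∑ k ∈ A₂, dist (T^[(k : ℕ)] x) (T^[((σ k) : ℕ)] y)
        ≤ ∑ k : Fin n, dist (T^[(k : ℕ)] x) (T^[((σ k) : ℕ)] y) :=
      Finset.sum_le_sum_of_subset_of_nonneg (Finset.subset_univ _)
        (fun _ _ _ => dist_nonneg)
    have hlt : (A₂.card : ℝ) * ε < (n * ε) * ε := by
      calc (A₂.card : ℝ) * ε ≤ _ := hle
        _ ≤ _ := hle2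
        _ < n * ε ^ 2 := hsum
        _ = (n * ε) * ε := by ring
    exact (lt_of_mul_lt_mul_right hlt hε.le).le
  -- assemble in ℝ≥0∞
  have hn0 : ((n : ℝ≥0∞)) ≠ 0 := by exact_mod_cast hn.ne'
  have hnt : ((n : ℝ≥0∞)) ≠ ∞ := ENNReal.natCast_ne_top n
  rw [empMeas_apply T x n hB,
    empMeas_apply T y n Metric.isOpen_thickening.measurableSet]
  have step1 : ((n : ℝ≥0∞))⁻¹ * (A.card : ℝ≥0∞)
      ≤ ((n : ℝ≥0∞))⁻¹ * ((C.card : ℝ≥0∞) + (A₂.card : ℝ≥0∞)) := by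
    apply mul_le_mul_right ?_ _
    have : A.card ≤ C.card + A₂.card := hcard.trans (by omega)
    exact_mod_cast this
  refine step1.trans ?_
  rw [mul_add]
  apply add_le_add_right
  have h2' : (A₂.card : ℝ≥0∞) ≤ (n : ℝ≥0∞) * ENNReal.ofReal ε := by
    have : (A₂.card : ℝ≥0∞) = ENNReal.ofReal (A₂.card : ℝ) := by
      rw [ENNReal.ofReal_natCast]
    rw [this, ← ENNReal.ofReal_natCast n, ← ENNReal.ofReal_mul (by positivity)]
    exact ENNReal.ofReal_le_ofReal h2
  calc ((n : ℝ≥0∞))⁻¹ * (A₂.card : ℝ≥0∞)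
      ≤ ((n : ℝ≥0∞))⁻¹ * ((n : ℝ≥0∞) * ENNReal.ofReal ε) := mul_le_mul_right h2' _
    _ = ENNReal.ofReal ε := by
        rw [← mul_assoc, ENNReal.inv_mul_cancel hn0 hnt, one_mul]

/-- for every `ε > 0` there is `δ > 0` such that whenever `Ē(x,y) < δ`
there exists `N` with `ρ(m_T(x,n), m_T(y,n)) < ε` for all `n ≥ N`. -/
theorem Ebar_small_implies_eventually_prokhorov_small {X : Type*} [MetricSpace X]
    [CompactSpace X] [MeasurableSpace X] [BorelSpace X] (T : X → X) (hT : Continuous T) :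
    ∀ ε > (0 : ℝ), ∃ δ > (0 : ℝ), ∀ x y : X, Ebar T x y < δ →
      ∃ N : ℕ, ∀ n : ℕ, N ≤ n →
        levyProkhorovDist (empMeas T x n) (empMeas T y n) < ε := by
  intro ε hε
  -- choose ε' < ε and δ = ε'^2
  set ε' : ℝ := min ε 1 / 2 with hε'def
  have hε'pos : 0 < ε' := by
    have : 0 < min ε 1 := lt_min hε one_pos
    positivity
  have hε'lt : ε' < ε := by
    have h1 : min ε 1 ≤ ε := min_le_left _ _
    have : ε' < min ε 1 := by
      rw [hε'def]; linarith [lt_min hε one_pos]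
    linarith
  refine ⟨ε' ^ 2, by positivity, ?_⟩
  intro x y hxy
  -- bound distances on X
  obtain ⟨C, hC⟩ : ∃ C : ℝ, ∀ a b : X, dist a b ≤ C := by
    obtain ⟨C, hC⟩ := Metric.isBounded_iff.mp (isCompact_univ (X := X)).isBounded
    exact ⟨C, fun a b => hC (Set.mem_univ a) (Set.mem_univ b)⟩
  have hC0 : 0 ≤ C := le_trans dist_nonneg (hC x x)
  have hbdd : IsBoundedUnder (· ≤ ·) atTop (fun n => EnDist T n x y) := by
    refine isBoundedUnder_of ⟨C, fun n => ?_⟩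
    have hbelow : BddBelow (Set.range fun σ : Equiv.Perm (Fin n) =>
        (1 / (n : ℝ)) * ∑ k : Fin n, dist (T^[(k : ℕ)] x) (T^[((σ k) : ℕ)] y)) :=
      (Set.finite_range _).bddBelow
    have hle := ciInf_le hbelow (1 : Equiv.Perm (Fin n))
    refine hle.trans ?_
    simp only [Equiv.Perm.one_apply]
    rcases Nat.eq_zero_or_pos n with h | h
    · subst h; simpa using hC0
    · have hsum : ∑ k : Fin n, dist (T^[(k : ℕ)] x) (T^[(k : ℕ)] y) ≤ n * C := by
        calc ∑ k : Fin n, dist (T^[(k : ℕ)] x) (T^[(k : ℕ)] y)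
            ≤ ∑ _k : Fin n, C := Finset.sum_le_sum fun k _ => hC _ _
          _ = n * C := by simp [mul_comm]
      have hn' : (0 : ℝ) < n := by exact_mod_cast h
      calc (1 / (n : ℝ)) * ∑ k : Fin n, dist (T^[(k : ℕ)] x) (T^[(k : ℕ)] y)
          ≤ (1 / (n : ℝ)) * (n * C) := by
            apply mul_le_mul_of_nonneg_left hsum (by positivity)
        _ = C := by field_simp
  have hev : ∀ᶠ n in atTop, EnDist T n x y < ε' ^ 2 :=
    eventually_lt_of_limsup_lt hxy hbdd
  obtain ⟨N', hN'⟩ := eventually_atTop.mp hev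
  refine ⟨max N' 1, fun n hn => ?_⟩
  have hn1 : 1 ≤ n := le_trans (le_max_right _ _) hn
  have hnpos : 0 < n := hn1
  have hnR : (0 : ℝ) < n := by exact_mod_cast hnpos
  obtain ⟨σ, hσ⟩ := exists_lt_of_ciInf_lt (hN' n (le_trans (le_max_left _ _) hn))
  have hsum : ∑ k : Fin n, dist (T^[(k : ℕ)] x) (T^[((σ k) : ℕ)] y) < n * ε' ^ 2 := by
    rw [one_div, ← div_eq_inv_mul] at hσ
    have := (div_lt_iff₀ hnR).mp hσ
    linarith [this]
  have hsum' : ∑ k : Fin n, dist (T^[(k : ℕ)] y) (T^[((σ.symm k) : ℕ)] x) < n * ε' ^ 2 := by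
    have hre : ∑ k : Fin n, dist (T^[(k : ℕ)] y) (T^[((σ.symm k) : ℕ)] x)
        = ∑ k : Fin n, dist (T^[(k : ℕ)] x) (T^[((σ k) : ℕ)] y) := by
      rw [← Equiv.sum_comp σ (fun k => dist (T^[(k : ℕ)] y) (T^[((σ.symm k) : ℕ)] x))]
      refine Finset.sum_congr rfl fun k _ => ?_
      rw [Equiv.symm_apply_apply, dist_comm]
    rw [hre]; exact hsum
  -- Prokhorov bound
  have key : levyProkhorovEDist (empMeas T x n) (empMeas T y n) ≤ ENNReal.ofReal ε' := by
    apply levyProkhorovEDist_le_of_forall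
    intro η B hη hηtop hB
    have h1 : empMeas T x n B ≤ empMeas T y n (Metric.thickening ε' B) + ENNReal.ofReal ε' :=
      emp_bound T x y hnpos σ hε'pos hsum hB
    have h2 : empMeas T y n B ≤ empMeas T x n (Metric.thickening ε' B) + ENNReal.ofReal ε' :=
      emp_bound T y x hnpos σ.symm hε'pos hsum' hB
    have htoReal : (ENNReal.ofReal ε').toReal = ε' := ENNReal.toReal_ofReal hε'pos.le
    constructor
    · apply meas_le_of_le_of_forall_le_meas_thickening_add _ _ hη.le
      rwa [htoReal]
    · apply meas_le_of_le_of_forall_le_meas_thickening_add _ _ hη.le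
      rwa [htoReal]
  calc levyProkhorovDist (empMeas T x n) (empMeas T y n)
      ≤ (ENNReal.ofReal ε').toReal :=
        ENNReal.toReal_mono ENNReal.ofReal_ne_top key
    _ = ε' := ENNReal.toReal_ofReal hε'pos.le
    _ < ε := hε'lt
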